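/- For a ∈ ℝ, a ≠ 0, define f_a(v) = (1 + a·v + a²)·sin(v) − v·cos(v). If a²·cos(v) + a·sin(v) ≥ 0 for the given v ∈ (0, π) and this admissibility holds at all z ∈ (0, v], then f_a(t·v)/f_a(v) ≥ t³ for all t ∈ (0,1], where both f_a(tv) and f_a(v) are strictly positive. -/

import Mathlib

set_option linter.unnecessarySeqFocus false
set_option linter.unusedVariables false

lemma sin_sub_mul_cos_pos {z : ℝ} (hz0 : 0 < z) (hzpi : z < Real.pi) :
    0 < Real.sin z - z * Real.cos z := by
  have hmono : StrictMonoOn (fun x => Real.sin x - x * Real.cos x) (Set.Icc 0 z) := by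
    apply strictMonoOn_of_deriv_pos (convex_Icc 0 z)
    · fun_prop
    · intro x hx
      rw [interior_Icc] at hx
      have hd : HasDerivAt (fun x => Real.sin x - x * Real.cos x) (x * Real.sin x) x := by
        have h1 := (Real.hasDerivAt_sin x).sub ((hasDerivAt_id x).mul (Real.hasDerivAt_cos x))
        exact h1.congr_deriv (by simp only [id_eq]; ring)
      rw [hd.deriv]
      exact mul_pos hx.1 (Real.sin_pos_of_pos_of_lt_pi hx.1 (hx.2.trans hzpi))
  have := hmono (Set.left_mem_Icc.2 hz0.le) (Set.right_mem_Icc.2 hz0.le) hz0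
  simpa using this

lemma A_pos {z : ℝ} (hz0 : 0 < z) (hzpi : z < Real.pi) :
    0 < 3 * Real.sin z - 3 * z * Real.cos z - z ^ 2 * Real.sin z := by
  have hmono : StrictMonoOn (fun x => 3 * Real.sin x - 3 * x * Real.cos x - x ^ 2 * Real.sin x)
      (Set.Icc 0 z) := by
    apply strictMonoOn_of_deriv_pos (convex_Icc 0 z)
    · fun_prop
    · intro x hx
      rw [interior_Icc] at hx
      have hd : HasDerivAt (fun x => 3 * Real.sin x - 3 * x * Real.cos x - x ^ 2 * Real.sin x)
          (x * (Real.sin x - x * Real.cos x)) x := by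
        have h1 := ((Real.hasDerivAt_sin x).const_mul 3).sub
          (((hasDerivAt_id x).const_mul 3).mul (Real.hasDerivAt_cos x))
        have h2 := ((hasDerivAt_pow 2 x)).mul (Real.hasDerivAt_sin x)
        have := h1.sub h2
        exact this.congr_deriv (by simp only [id_eq]; ring)
      rw [hd.deriv]
      exact mul_pos hx.1 (sin_sub_mul_cos_pos hx.1 (hx.2.trans hzpi))
  have := hmono (Set.left_mem_Icc.2 hz0.le) (Set.right_mem_Icc.2 hz0.le) hz0
  simpa using this

lemma key_quad {a z : ℝ} (hz0 : 0 < z) (hzpi : z < Real.pi) (ha : a ≠ 0)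
    (hadm : a ^ 2 * Real.cos z + a * Real.sin z ≥ 0) :
    0 ≤ (3 * Real.sin z - 3 * z * Real.cos z - z ^ 2 * Real.sin z)
      + a * (2 * z * Real.sin z - z ^ 2 * Real.cos z)
      + a ^ 2 * (3 * Real.sin z - z * Real.cos z) := by
  set s := Real.sin z with hs_def
  set c := Real.cos z with hc_def
  have hs : 0 < s := Real.sin_pos_of_pos_of_lt_pi hz0 hzpi
  have hd : 0 < s - z * c := sin_sub_mul_cos_pos hz0 hzpi
  have hA : 0 < 3 * s - 3 * z * c - z ^ 2 * s := A_pos hz0 hzpi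
  rcases lt_or_gt_of_ne ha with haneg | hapos
  · -- a < 0
    have hc : 0 < c := by nlinarith [mul_neg_of_neg_of_pos haneg hs, sq_nonneg a]
    have hw : s ≤ -(a * c) := by nlinarith [mul_pos (neg_pos.2 haneg) hs]
    have hpyth : s ^ 2 + c ^ 2 = 1 := Real.sin_sq_add_cos_sq z
    have hvert : 0 ≤ 2 * (3 * s - z * c) * s - (2 * z * s - z ^ 2 * c) * c := by
      nlinarith [sq_nonneg (z * c - 2 * s)]
    nlinarith [mul_nonneg (sub_nonneg.2 hw) hvert, mul_pos hc hc, sq_nonneg (a * c + s),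
      mul_nonneg (mul_nonneg (sub_nonneg.2 hw) (sub_nonneg.2 hw))
        (by nlinarith : (0:ℝ) ≤ 3 * s - z * c)]
  · -- a > 0
    have hB : 0 < 2 * z * s - z ^ 2 * c := by nlinarith
    have hC : 0 < 3 * s - z * c := by nlinarith
    nlinarith [mul_pos hapos hB, mul_pos (mul_pos hapos hapos) hC]

noncomputable def grushinF (a v : ℝ) : ℝ :=
  (1 + a * v + a ^ 2) * Real.sin v - v * Real.cos v

lemma grushinF_hasDerivAt (a z : ℝ) :
    HasDerivAt (grushinF a)
      (a * Real.sin z + (1 + a * z + a ^ 2) * Real.cos z - (Real.cos z - z * Real.sin z)) z := by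
  have h1 : HasDerivAt (fun x => (1 + a * x + a ^ 2) * Real.sin x)
      (a * Real.sin z + (1 + a * z + a ^ 2) * Real.cos z) z := by
    have hp : HasDerivAt (fun x : ℝ => 1 + a * x + a ^ 2) a z := by
      have := ((hasDerivAt_id z).const_mul a).const_add 1
      have := this.add_const (a ^ 2)
      simpa using this
    exact hp.mul (Real.hasDerivAt_sin z)
  have h2 : HasDerivAt (fun x : ℝ => x * Real.cos x) (Real.cos z - z * Real.sin z) z := by
    have := (hasDerivAt_id z).mul (Real.hasDerivAt_cos z)
    exact this.congr_deriv (by simp only [id_eq]; ring)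
  exact h1.sub h2

lemma grushinF_pos {a z : ℝ} (hz0 : 0 < z) (hzpi : z < Real.pi)
    (hadm : a ^ 2 * Real.cos z + a * Real.sin z ≥ 0) :
    0 < grushinF a z := by
  have hd : 0 < Real.sin z - z * Real.cos z := sin_sub_mul_cos_pos hz0 hzpi
  have hs : 0 < Real.sin z := Real.sin_pos_of_pos_of_lt_pi hz0 hzpi
  unfold grushinF
  nlinarith [mul_nonneg hadm hz0.le, sq_nonneg a]

lemma g_deriv_nonpos {a z : ℝ} (hz0 : 0 < z) (hzpi : z < Real.pi) (ha : a ≠ 0)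
    (hadm : a ^ 2 * Real.cos z + a * Real.sin z ≥ 0) :
    deriv (fun x => grushinF a x / x ^ 3) z ≤ 0 := by
  have hkey := key_quad hz0 hzpi ha hadm
  have hz3 : (z : ℝ) ^ 3 ≠ 0 := pow_ne_zero 3 hz0.ne'
  have hd : HasDerivAt (fun x => grushinF a x / x ^ 3)
      (((a * Real.sin z + (1 + a * z + a ^ 2) * Real.cos z - (Real.cos z - z * Real.sin z)) * z ^ 3
        - grushinF a z * (3 * z ^ 2)) / (z ^ 3) ^ 2) z := by
    have := (grushinF_hasDerivAt a z).div (hasDerivAt_pow 3 z) hz3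
    exact this.congr_deriv (by norm_num)
  rw [hd.deriv]
  apply div_nonpos_of_nonpos_of_nonneg _ (sq_nonneg _)
  have : (a * Real.sin z + (1 + a * z + a ^ 2) * Real.cos z - (Real.cos z - z * Real.sin z)) * z ^ 3
      - grushinF a z * (3 * z ^ 2)
      = -(z ^ 2 * ((3 * Real.sin z - 3 * z * Real.cos z - z ^ 2 * Real.sin z)
      + a * (2 * z * Real.sin z - z ^ 2 * Real.cos z)
      + a ^ 2 * (3 * Real.sin z - z * Real.cos z))) := by
    unfold grushinF; ring
  rw [this]
  exact neg_nonpos.2 (mul_nonneg (sq_nonneg z) hkey)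

theorem grushin_jacobian_contraction (a v : ℝ) (ha : a ≠ 0)
    (hv : v ∈ Set.Ioo 0 Real.pi)
    (hadm : ∀ z ∈ Set.Ioc (0 : ℝ) v, a ^ 2 * Real.cos z + a * Real.sin z ≥ 0) :
    ∀ t ∈ Set.Ioc (0 : ℝ) 1,
      0 < grushinF a (t * v) ∧ 0 < grushinF a v ∧
      grushinF a (t * v) / grushinF a v ≥ t ^ 3 := by
  obtain ⟨hv0, hvpi⟩ := hv
  intro t ⟨ht0, ht1⟩
  have htv0 : 0 < t * v := mul_pos ht0 hv0
  have htvle : t * v ≤ v := by nlinarith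
  have htvpi : t * v < Real.pi := lt_of_le_of_lt htvle hvpi
  have hadm_tv := hadm (t * v) ⟨htv0, htvle⟩
  have hadm_v := hadm v ⟨hv0, le_refl v⟩
  have hftv : 0 < grushinF a (t * v) := grushinF_pos htv0 htvpi hadm_tv
  have hfv : 0 < grushinF a v := grushinF_pos hv0 hvpi hadm_v
  refine ⟨hftv, hfv, ?_⟩
  have hanti : AntitoneOn (fun x => grushinF a x / x ^ 3) (Set.Ioc 0 v) := by
    apply antitoneOn_of_deriv_nonpos (convex_Ioc 0 v)
    · apply ContinuousOn.div
      · exact (by unfold grushinF; fun_prop : Continuous (grushinF a)).continuousOn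
      · fun_prop
      · intro x hx; exact pow_ne_zero 3 hx.1.ne'
    · rw [interior_Ioc]
      intro x hx
      exact ((grushinF_hasDerivAt a x).div (hasDerivAt_pow 3 x)
        (pow_ne_zero 3 hx.1.ne')).differentiableAt.differentiableWithinAt
    · rw [interior_Ioc]
      intro x hx
      exact g_deriv_nonpos hx.1 (hx.2.trans hvpi) ha (hadm x ⟨hx.1, hx.2.le⟩)
  have hg := hanti ⟨htv0, htvle⟩ ⟨hv0, le_refl v⟩ htvle
  simp only at hg
  -- hg : grushinF a v / v ^ 3 ≤ grushinF a (t * v) / (t * v) ^ 3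
  rw [div_le_div_iff₀ (pow_pos hv0 3) (pow_pos htv0 3)] at hg
  rw [ge_iff_le, le_div_iff₀ hfv]
  have hv3 : 0 < v ^ 3 := pow_pos hv0 3
  nlinarith [hg, mul_pos hfv hv3]
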